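/- Let X be an infinite ℤ²-subshift and let P be a convex integer polygon. If for every vertex w of P the sector based at w is corner coding for X, then for all sufficiently large positive integers n the dilated polygon n·P is a coding polygon for X. Conversely, if P is a coding polygon for X, then for every vertex w of P the sector based at w is corner coding for X. -/

import Mathlib

namespace PolygonalShifts

abbrev Z2 : Type := ℤ × ℤ

abbrev Config (A : Type*) : Type _ := Z2 → A

/-- The translation action of `ℤ²` on configurations. -/
def shiftAct {A : Type*} (u : Z2) (x : Config A) : Config A := fun w => x (u + w)

/-- A `ℤ²`-subshift: a closed (for the product topology, with the alphabet discrete)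
and translation-invariant set of configurations. -/
def IsSubshift {A : Type*} (X : Set (Config A)) : Prop :=
  (letI : TopologicalSpace A := ⊥
   IsClosed X) ∧
  ∀ u : Z2, ∀ x ∈ X, shiftAct u x ∈ X

/-- The canonical embedding `ℤ² → ℝ²`. -/
def toR2 (p : Z2) : ℝ × ℝ := ((p.1 : ℝ), (p.2 : ℝ))

/-- `S` X-codes `S'`, for subsets `S, S'` of `ℝ²`. -/
def Codes {A : Type*} (X : Set (Config A)) (S S' : Set (ℝ × ℝ)) : Prop :=
  ∀ x ∈ X, ∀ x' ∈ X,
    (∀ p : Z2, toR2 p ∈ S → x p = x' p) →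
    ∀ p : Z2, toR2 p ∈ S' → x p = x' p

/-- `S` X-codes `S'`, for subsets `S, S'` of `ℤ²`. -/
def CodesZ {A : Type*} (X : Set (Config A)) (S S' : Set Z2) : Prop :=
  ∀ x ∈ X, ∀ x' ∈ X, (∀ p ∈ S, x p = x' p) → ∀ p ∈ S', x p = x' p

/-- `Y` is a recoding of `X` via the finite set `F ⊆ ℤ²`. -/
def IsRecodingVia {A A' : Type*} (X : Set (Config A)) (Y : Set (Config A'))
    (F : Set Z2) : Prop :=
  letI : TopologicalSpace A := ⊥
  letI : TopologicalSpace A' := ⊥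
  ∃ Ψ : X ≃ₜ Y,
    (∀ (u : Z2) (x x' : X), (x' : Config A) = shiftAct u (x : Config A) →
      (↑(Ψ x') : Config A') = shiftAct u (↑(Ψ x) : Config A')) ∧
    (∀ (u : Z2) (x x' : X),
      (↑(Ψ x) : Config A') u = (↑(Ψ x') : Config A') u ↔
        ∀ f ∈ F, (x : Config A) (f + u) = (x' : Config A) (f + u))

/-- `Y` is a recoding of `X`. -/
def IsRecoding {A A' : Type*} (X : Set (Config A)) (Y : Set (Config A')) : Prop :=
  ∃ F : Set Z2, F.Finite ∧ IsRecodingVia X Y F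

/-- Integer cross product. -/
def crossZ (u v : Z2) : ℤ := u.1 * v.2 - u.2 * v.1

/-- Real cross product. -/
def crossR (u v : ℝ × ℝ) : ℝ := u.1 * v.2 - u.2 * v.1

/-- A convex integer polygon, given by its (at least three) vertices listed in
counterclockwise order: every vertex lies strictly to the left of every directed edge. -/
structure IntPolygon where
  n : ℕ
  vert : Fin (n + 3) → Z2
  convex : ∀ i j : Fin (n + 3), j ≠ i → j ≠ i + 1 →
    0 < crossZ (vert (i + 1) - vert i) (vert j - vert i)

namespace IntPolygon

/-- The oriented edge vector from vertex `i` to vertex `i+1`. -/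
def edgeVec (P : IntPolygon) (i : Fin (P.n + 3)) : Z2 := P.vert (i + 1) - P.vert i

/-- The polygon as a subset of `ℝ²` (the convex hull of its vertices). -/
def carrier (P : IntPolygon) : Set (ℝ × ℝ) :=
  convexHull ℝ (Set.range fun i => toR2 (P.vert i))

lemma crossZ_smul (m : ℤ) (u v : Z2) : crossZ (m • u) (m • v) = m ^ 2 * crossZ u v := by
  simp only [crossZ, Prod.smul_fst, Prod.smul_snd, smul_eq_mul]
  ring

/-- The dilation of a polygon by a positive integer factor about the origin. -/
def dilate (P : IntPolygon) (m : ℤ) (hm : 0 < m) : IntPolygon where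
  n := P.n
  vert := fun i => m • P.vert i
  convex := by
    intro i j hj hj1
    have h := P.convex i j hj hj1
    have e1 : m • P.vert (i + 1) - m • P.vert i = m • (P.vert (i + 1) - P.vert i) :=
      (smul_sub m _ _).symm
    have e2 : m • P.vert j - m • P.vert i = m • (P.vert j - P.vert i) :=
      (smul_sub m _ _).symm
    rw [e1, e2, crossZ_smul]
    exact mul_pos (pow_pos hm 2) h

end IntPolygon

/-- `P` is a coding polygon for `X`: for each vertex `w`, the polygon with `w`
removed X-codes `w`. -/
def IsCodingPolygon {A : Type*} (X : Set (Config A)) (P : IntPolygon) : Prop :=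
  ∀ i : Fin (P.n + 3),
    Codes X (P.carrier \ {toR2 (P.vert i)}) {toR2 (P.vert i)}

/-- `X` is polygonal with respect to `P`. -/
def Polygonal {A : Type*} (X : Set (Config A)) (P : IntPolygon) : Prop :=
  X.Infinite ∧ IsCodingPolygon X P

/-- The closed half plane `H_v = {w : v₁ w₂ − v₂ w₁ ≥ 0}` to the left of the direction `v`. -/
def leftHalfPlane (v : ℝ × ℝ) : Set (ℝ × ℝ) := {w | 0 ≤ v.1 * w.2 - v.2 * w.1}

/-- The ray directed by `v` is expansive for `X`: `H_v` X-codes all of `ℝ²`. -/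
def ExpansiveRay {A : Type*} (X : Set (Config A)) (v : ℝ × ℝ) : Prop :=
  Codes X (leftHalfPlane v) Set.univ

/-- For a primitive integer direction `v`, the line `L₀`: the translate of `L = ℝ·v`
by an integer vector, lying outside `H_v` and closest to `L`. -/
def lineL0 (v : Z2) : Set (ℝ × ℝ) := {w | (v.1 : ℝ) * w.2 - (v.2 : ℝ) * w.1 = -1}

/-- A block of `m` consecutive lattice points on `L₀`, starting at `z`. -/
def blockOn (v z : Z2) (m : ℕ) : Set (ℝ × ℝ) :=
  (fun k : ℕ => toR2 (z + (k : ℤ) • v)) '' {k | k < m}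

/-- The (nonexpansive) rational ray directed by the primitive vector `v` is closing for `X`. -/
def ClosingRay {A : Type*} (X : Set (Config A)) (v : Z2) : Prop :=
  ∃ N : ℕ, ∀ z : Z2, v.1 * z.2 - v.2 * z.1 = -1 →
    ∀ m : ℕ, N ≤ m →
      Codes X (leftHalfPlane (toR2 v) ∪ blockOn v z m) (lineL0 v)

/-- The sector (with vertex the origin) determined by the rays through `e₁` and `e₂`:
lattice points on either ray or strictly between them. -/
def SectorZ (e₁ e₂ : Z2) : Set Z2 :=
  {p | SameRay ℝ (toR2 e₁) (toR2 p) ∨ SameRay ℝ (toR2 e₂) (toR2 p) ∨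
       (0 < crossZ e₁ p ∧ 0 < crossZ p e₂)}

/-- The rational sector determined by `(e₁, e₂)` is corner coding for `X`. -/
def IsCornerCoding {A : Type*} (X : Set (Config A)) (e₁ e₂ : Z2) : Prop :=
  CodesZ X (SectorZ e₁ e₂ \ {0}) {0}

/-- The rational sector determined by `(e₁, e₂)` is weakly corner coding for `X`. -/
def IsWeaklyCornerCoding {A : Type*} (X : Set (Config A)) (e₁ e₂ : Z2) : Prop :=
  ∃ F₀ : Set Z2, F₀.Finite ∧ F₀ ⊆ SectorZ e₁ e₂ ∧
    ∀ F : Set Z2, F.Finite → F ⊆ SectorZ e₁ e₂ →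
      CodesZ X (SectorZ e₁ e₂ \ F) (SectorZ e₁ e₂ \ F₀)

/-- The sector based at the vertex `i` of the polygon `P`: lattice points in the convex
cone with apex `P.vert i` spanned by the two edges of `P` incident to that vertex. -/
def vertexSector (P : IntPolygon) (i : Fin (P.n + 3)) : Set Z2 :=
  {p | ∃ s t : ℝ, 0 ≤ s ∧ 0 ≤ t ∧
    toR2 p = toR2 (P.vert i) + s • toR2 (P.vert (i - 1) - P.vert i)
      + t • toR2 (P.vert (i + 1) - P.vert i)}

/-- `P` is a coding polygon for some recoding of `X`. -/
def HasRecodingPolygon {A : Type*} (X : Set (Config A)) (P : IntPolygon) : Prop :=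
  ∃ (A' : Type) (_ : Fintype A') (Y : Set (Config A')),
    IsSubshift Y ∧ IsRecoding X Y ∧ IsCodingPolygon Y P

/-- `P` is a minimal recoding polygon for `X`. -/
def IsMinimalRecodingPolygon {A : Type*} (X : Set (Config A)) (P : IntPolygon) : Prop :=
  HasRecodingPolygon X P ∧
  (∀ Q : IntPolygon, HasRecodingPolygon X Q → P.n ≤ Q.n) ∧
  (∀ Q : IntPolygon, HasRecodingPolygon X Q → Q.n = P.n →
    Q.carrier ⊆ P.carrier → Q.carrier = P.carrier)


section Aux

lemma toR2_add (p q : Z2) : toR2 (p + q) = toR2 p + toR2 q := by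
  simp [toR2, Prod.ext_iff]

lemma toR2_smul (m : ℤ) (p : Z2) : toR2 (m • p) = (m : ℝ) • toR2 p := by
  simp only [toR2, Prod.ext_iff, Prod.smul_fst, Prod.smul_snd, smul_eq_mul]
  push_cast
  constructor <;> ring

lemma toR2_injective : Function.Injective toR2 := by
  intro p q h
  simp only [toR2, Prod.ext_iff] at h
  exact Prod.ext (by exact_mod_cast h.1) (by exact_mod_cast h.2)

/-- Compactness: a coding of a point by a set can be replaced by a finite subset. -/
lemma finite_codes {A : Type} [Fintype A] (X : Set (Config A))
    (hcl : letI : TopologicalSpace A := ⊥; IsClosed X) (S : Set Z2) (q : Z2)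
    (h : CodesZ X S {q}) :
    ∃ F : Set Z2, F.Finite ∧ F ⊆ S ∧ CodesZ X F {q} := by
  letI : TopologicalSpace A := ⊥
  haveI : DiscreteTopology A := ⟨rfl⟩
  set K : Set (Config A × Config A) :=
    {z | (z.1 ∈ X ∧ z.2 ∈ X) ∧ z.1 q ≠ z.2 q} with hK
  have hcont : ∀ p : Z2, Continuous (fun z : Config A × Config A => (z.1 p, z.2 p)) :=
    fun p => ((continuous_apply p).comp continuous_fst).prodMk
      ((continuous_apply p).comp continuous_snd)
  have hopen : ∀ p : Z2, IsOpen {z : Config A × Config A | z.1 p ≠ z.2 p} := by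
    intro p
    exact (isOpen_discrete {ab : A × A | ab.1 ≠ ab.2}).preimage (hcont p)
  have hKcl : IsClosed K := by
    have h1 : IsClosed {z : Config A × Config A | z.1 ∈ X ∧ z.2 ∈ X} :=
      (hcl.preimage continuous_fst).inter (hcl.preimage continuous_snd)
    have h2 : IsClosed {z : Config A × Config A | z.1 q ≠ z.2 q} := by
      have : IsOpen {z : Config A × Config A | z.1 q = z.2 q} :=
        (isOpen_discrete {ab : A × A | ab.1 = ab.2}).preimage (hcont q)
      have h3 := this.isClosed_compl
      exact h3
    exact h1.inter h2
  have hKcomp : IsCompact K := hKcl.isCompact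
  have hcover : K ⊆ ⋃ p ∈ S, {z : Config A × Config A | z.1 p ≠ z.2 p} := by
    rintro ⟨x, x'⟩ ⟨⟨hx, hx'⟩, hne⟩
    by_contra hc
    simp only [Set.mem_iUnion, Set.mem_setOf_eq, not_exists, not_not] at hc
    exact hne (h x hx x' hx' hc q rfl)
  obtain ⟨F, hFS, hFfin, hsub⟩ := hKcomp.elim_finite_subcover_image (fun p _ => hopen p) hcover
  refine ⟨F, hFfin, hFS, ?_⟩
  intro x hx x' hx' hag p hp
  rw [Set.mem_singleton_iff] at hp; subst hp
  by_contra hne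
  have : (x, x') ∈ K := ⟨⟨hx, hx'⟩, hne⟩
  have := hsub this
  simp only [Set.mem_iUnion, Set.mem_setOf_eq] at this
  obtain ⟨p, hpF, hpne⟩ := this
  exact hpne (hag p hpF)

end Aux

section Geom

lemma fin_one_ne_zero (n : ℕ) : (1 : Fin (n+3)) ≠ 0 := by
  intro h
  have := congrArg Fin.val h
  simp [Fin.val_one] at this

lemma fin_two_ne_zero (n : ℕ) : (2 : Fin (n+3)) ≠ 0 := by
  intro h
  have h1 := congrArg Fin.val h
  have h2 : ((2 : Fin (n+3)) : ℕ) = 2 % (n+3) := rfl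
  have h3 : ((0 : Fin (n+3)) : ℕ) = 0 := rfl
  rw [h2, h3, Nat.mod_eq_of_lt (by omega)] at h1
  exact two_ne_zero h1

lemma fin_sub_one_ne (n : ℕ) (i : Fin (n+3)) : i - 1 ≠ i := by
  intro h
  exact fin_one_ne_zero n (by rwa [sub_eq_self] at h)

lemma fin_sub_one_ne_add_one (n : ℕ) (i : Fin (n+3)) : i - 1 ≠ i + 1 := by
  intro h
  have : (2 : Fin (n+3)) = 0 := by
    have := sub_eq_zero.mpr h.symm
    rw [show i + 1 - (i - 1) = 2 by open Fin.CommRing in ring] at this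
    exact this
  exact fin_two_ne_zero n this

/-- Every vertex of the polygon lies in the cone at vertex `i`. -/
lemma vert_mem_cone (P : IntPolygon) (i j : Fin (P.n + 3)) :
    ∃ s t : ℝ, 0 ≤ s ∧ 0 ≤ t ∧
      toR2 (P.vert j) = toR2 (P.vert i) + s • toR2 (P.vert (i - 1) - P.vert i)
        + t • toR2 (P.vert (i + 1) - P.vert i) := by
  set a : Z2 := P.vert (i - 1) - P.vert i with ha
  set b : Z2 := P.vert (i + 1) - P.vert i with hb
  set d : Z2 := P.vert j - P.vert i with hd
  have hD : 0 < crossZ b a :=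
    P.convex i (i - 1) (fin_sub_one_ne P.n i) (fin_sub_one_ne_add_one P.n i)
  have hbd : 0 ≤ crossZ b d := by
    by_cases h1 : j = i
    · simp [hd, h1, crossZ]
    by_cases h2 : j = i + 1
    · have hdb : d = b := by rw [hd, hb, h2]
      simp [hdb, crossZ, mul_comm]
    · exact le_of_lt (P.convex i j h1 h2)
  have hda : 0 ≤ crossZ d a := by
    by_cases h1 : j = i - 1
    · have hda' : d = a := by rw [hd, ha, h1]
      simp [hda', crossZ, mul_comm]
    by_cases h2 : j = i
    · simp [hd, h2, crossZ]
    · have hc := P.convex (i - 1) j h1 (by rwa [sub_add_cancel])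
      rw [sub_add_cancel] at hc
      simp only [crossZ, ha, hd, Prod.fst_sub, Prod.snd_sub] at hc ⊢
      ring_nf at hc ⊢
      linarith
  have hDR : (0 : ℝ) < (crossZ b a : ℝ) := by exact_mod_cast hD
  refine ⟨(crossZ b d : ℝ) / (crossZ b a : ℝ), (crossZ d a : ℝ) / (crossZ b a : ℝ),
    div_nonneg (by exact_mod_cast hbd) hDR.le,
    div_nonneg (by exact_mod_cast hda) hDR.le, ?_⟩
  have e0 : ((crossZ b a : ℤ) : ℝ)
      = ((P.vert (i+1)).1 - (P.vert i).1 : ℝ) * ((P.vert (i-1)).2 - (P.vert i).2 : ℝ)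
        - ((P.vert (i+1)).2 - (P.vert i).2 : ℝ) * ((P.vert (i-1)).1 - (P.vert i).1 : ℝ) := by
    simp only [crossZ, hb, ha, Prod.fst_sub, Prod.snd_sub]
    push_cast
    ring
  have e1 : ((crossZ b d : ℤ) : ℝ)
      = ((P.vert (i+1)).1 - (P.vert i).1 : ℝ) * ((P.vert j).2 - (P.vert i).2 : ℝ)
        - ((P.vert (i+1)).2 - (P.vert i).2 : ℝ) * ((P.vert j).1 - (P.vert i).1 : ℝ) := by
    simp only [crossZ, hb, hd, Prod.fst_sub, Prod.snd_sub]
    push_cast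
    ring
  have e2 : ((crossZ d a : ℤ) : ℝ)
      = ((P.vert j).1 - (P.vert i).1 : ℝ) * ((P.vert (i-1)).2 - (P.vert i).2 : ℝ)
        - ((P.vert j).2 - (P.vert i).2 : ℝ) * ((P.vert (i-1)).1 - (P.vert i).1 : ℝ) := by
    simp only [crossZ, hd, ha, Prod.fst_sub, Prod.snd_sub]
    push_cast
    ring
  have hDne : (((P.vert (i+1)).1 - (P.vert i).1 : ℝ) * ((P.vert (i-1)).2 - (P.vert i).2 : ℝ)
        - ((P.vert (i+1)).2 - (P.vert i).2 : ℝ) * ((P.vert (i-1)).1 - (P.vert i).1 : ℝ)) ≠ 0 := by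
    rw [← e0]; exact hDR.ne'
  rw [e0, e1, e2]
  simp only [toR2, ha, hb, Prod.ext_iff, Prod.fst_add, Prod.snd_add, Prod.smul_fst,
    Prod.smul_snd, smul_eq_mul, Prod.fst_sub, Prod.snd_sub]
  push_cast
  constructor <;> · field_simp; ring

end Geom

section Hull

/-- The carrier is contained in the cone at each vertex. -/
lemma carrier_subset_cone (P : IntPolygon) (i : Fin (P.n + 3)) (q : ℝ × ℝ)
    (hq : q ∈ P.carrier) :
    ∃ s t : ℝ, 0 ≤ s ∧ 0 ≤ t ∧
      q = toR2 (P.vert i) + s • toR2 (P.vert (i - 1) - P.vert i)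
        + t • toR2 (P.vert (i + 1) - P.vert i) := by
  set C : Set (ℝ × ℝ) := {q | ∃ s t : ℝ, 0 ≤ s ∧ 0 ≤ t ∧
      q = toR2 (P.vert i) + s • toR2 (P.vert (i - 1) - P.vert i)
        + t • toR2 (P.vert (i + 1) - P.vert i)} with hC
  have hconv : Convex ℝ C := by
    rintro q1 ⟨s1, t1, hs1, ht1, e1⟩ q2 ⟨s2, t2, hs2, ht2, e2⟩ θ μ hθ hμ hsum
    refine ⟨θ * s1 + μ * s2, θ * t1 + μ * t2,
      by positivity, by positivity, ?_⟩
    have hθμ : θ = 1 - μ := by linarith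
    subst hθμ
    rw [e1, e2]
    module
  have hrange : Set.range (fun j => toR2 (P.vert j)) ⊆ C := by
    rintro _ ⟨j, rfl⟩
    exact vert_mem_cone P i j
  exact convexHull_min hrange hconv hq

/-- Membership of a translated sector point in the dilated polygon's carrier. -/
lemma mem_dilate_carrier (P : IntPolygon) (i : Fin (P.n + 3)) (f : Z2) (s t : ℝ)
    (hs : 0 ≤ s) (ht : 0 ≤ t)
    (heq : toR2 f = toR2 (P.vert i) + s • toR2 (P.vert (i - 1) - P.vert i)
      + t • toR2 (P.vert (i + 1) - P.vert i))
    (n : ℤ) (hn : 0 < n) (hst : s + t ≤ (n : ℝ)) :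
    toR2 (f + (n - 1) • P.vert i)
      ∈ convexHull ℝ (Set.range fun j => toR2 (n • P.vert j)) := by
  have hnR : (0 : ℝ) < (n : ℝ) := by exact_mod_cast hn
  set c : Fin 3 → ℝ := ![1 - s / n - t / n, s / n, t / n] with hc
  set z : Fin 3 → ℝ × ℝ := ![toR2 (n • P.vert i), toR2 (n • P.vert (i - 1)),
    toR2 (n • P.vert (i + 1))] with hz
  have hmem : ∀ k : Fin 3, z k ∈ convexHull ℝ (Set.range fun j => toR2 (n • P.vert j)) := by
    intro k
    fin_cases k <;> exact subset_convexHull ℝ _ ⟨_, rfl⟩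
  have hcn : ∀ k ∈ Finset.univ, 0 ≤ c k := by
    intro k _
    fin_cases k
    · simp only [hc]
      have h1 : s / n + t / n ≤ 1 := by
        rw [← add_div, div_le_one hnR]; exact hst
      simp [Matrix.cons_val_zero]
      linarith
    · simpa [hc] using div_nonneg hs hnR.le
    · simpa [hc] using div_nonneg ht hnR.le
  have hsum : ∑ k : Fin 3, c k = 1 := by
    simp [hc, Fin.sum_univ_three]
    ring
  have := (convex_convexHull ℝ (Set.range fun j => toR2 (n • P.vert j))).sum_mem hcn hsum
    (fun k _ => hmem k)
  convert this using 1
  rw [Fin.sum_univ_three]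
  simp only [hc, hz, Matrix.cons_val_zero, Matrix.cons_val_one, Matrix.head_cons,
    Matrix.cons_val_two, Matrix.tail_cons]
  have h1 : ((f + (n - 1) • P.vert i).1 : ℝ) = (f.1 : ℝ) + ((n : ℝ) - 1) * ((P.vert i).1 : ℝ) := by
    push_cast [Prod.fst_add, Prod.smul_fst, smul_eq_mul]
    ring
  have hf1 : (f.1 : ℝ) = ((P.vert i).1 : ℝ)
      + s * (((P.vert (i-1)).1 : ℝ) - ((P.vert i).1 : ℝ))
      + t * (((P.vert (i+1)).1 : ℝ) - ((P.vert i).1 : ℝ)) := by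
    have := congrArg Prod.fst heq
    simpa [toR2, Prod.fst_add, Prod.smul_fst, Prod.fst_sub, smul_eq_mul] using this
  have hf2 : (f.2 : ℝ) = ((P.vert i).2 : ℝ)
      + s * (((P.vert (i-1)).2 : ℝ) - ((P.vert i).2 : ℝ))
      + t * (((P.vert (i+1)).2 : ℝ) - ((P.vert i).2 : ℝ)) := by
    have := congrArg Prod.snd heq
    simpa [toR2, Prod.snd_add, Prod.smul_snd, Prod.snd_sub, smul_eq_mul] using this
  simp only [toR2, Prod.ext_iff, Prod.fst_add, Prod.snd_add, Prod.smul_fst, Prod.smul_snd,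
    smul_eq_mul, Prod.fst_add, Prod.snd_add]
  push_cast
  constructor
  · field_simp
    linear_combination hf1
  · field_simp
    linear_combination hf2

end Hull


/-- if every vertex sector of the convex integer polygon `P` is corner
coding for the infinite subshift `X`, then `n·P` is a coding polygon for `X` for all
sufficiently large positive `n`; conversely, if `P` is a coding polygon for `X` then
every vertex sector of `P` is corner coding for `X`. -/
theorem statement8 {A : Type} [Fintype A] [Nonempty A] (X : Set (Config A))
    (hX : IsSubshift X) (hInf : X.Infinite) (P : IntPolygon) :
    ((∀ i : Fin (P.n + 3), CodesZ X (vertexSector P i \ {P.vert i}) {P.vert i}) →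
      ∃ N : ℤ, ∀ n : ℤ, ∀ hn : 0 < n, N ≤ n → IsCodingPolygon X (P.dilate n hn)) ∧
    (IsCodingPolygon X P →
      ∀ i : Fin (P.n + 3), CodesZ X (vertexSector P i \ {P.vert i}) {P.vert i}) := by
  constructor
  · intro hcc
    have hfin : ∀ i : Fin (P.n + 3), ∃ F : Set Z2, F.Finite ∧
        F ⊆ vertexSector P i \ {P.vert i} ∧ CodesZ X F {P.vert i} :=
      fun i => finite_codes X hX.1 _ _ (hcc i)
    choose F hFfin hFsub hFcode using hfin
    have hev : ∀ i : Fin (P.n + 3), ∀ f ∈ F i, ∀ᶠ n : ℤ in Filter.atTop,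
        toR2 (f + (n - 1) • P.vert i)
          ∈ convexHull ℝ (Set.range fun j => toR2 (n • P.vert j)) ∧ 0 < n := by
      intro i f hf
      obtain ⟨s, t, hs, ht, heq⟩ := (hFsub i hf).1
      filter_upwards [Filter.eventually_ge_atTop (max ⌈s + t⌉ 1)] with n hn
      have hpos : 0 < n := lt_of_lt_of_le zero_lt_one (le_trans (le_max_right _ _) hn)
      have hst : s + t ≤ (n : ℝ) := by
        refine le_trans (Int.le_ceil _) ?_
        exact_mod_cast le_trans (le_max_left _ _) hn
      exact ⟨mem_dilate_carrier P i f s t hs ht heq n hpos hst, hpos⟩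
    have hev2 : ∀ᶠ n : ℤ in Filter.atTop, ∀ i : Fin (P.n + 3), ∀ f ∈ F i,
        toR2 (f + (n - 1) • P.vert i)
          ∈ convexHull ℝ (Set.range fun j => toR2 (n • P.vert j)) ∧ 0 < n := by
      rw [Filter.eventually_all]
      intro i
      exact (Filter.eventually_all_finite (hFfin i)).mpr (hev i)
    obtain ⟨N, hN⟩ := Filter.eventually_atTop.1 hev2
    refine ⟨N, ?_⟩
    intro n hn hNn i
    intro x hx x' hx' hag p hp
    have hp' : p = n • P.vert i := toR2_injective (Set.mem_singleton_iff.mp hp)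
    subst hp'
    set u : Z2 := (n - 1) • P.vert i with hu
    have hxu := hX.2 u x hx
    have hxu' := hX.2 u x' hx'
    have hagF : ∀ q ∈ F i, shiftAct u x q = shiftAct u x' q := by
      intro q hq
      obtain ⟨hmem, _⟩ := hN n hNn i q hq
      have hne : toR2 (q + u) ≠ toR2 (n • P.vert i) := by
        intro h
        have h2 : q + u = n • P.vert i := toR2_injective h
        have h3 : q = P.vert i := by
          have : q = n • P.vert i - u := by rw [← h2]; abel
          rw [this, hu, sub_smul, one_smul]
          abel
        exact (hFsub i hq).2 (by simp [h3])
      show x (u + q) = x' (u + q)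
      rw [add_comm]
      exact hag (q + u) ⟨hmem, hne⟩
    have hkey := hFcode i _ hxu _ hxu' hagF (P.vert i) rfl
    have huw : u + P.vert i = n • P.vert i := by
      rw [hu, sub_smul, one_smul, sub_add_cancel]
    show x (n • P.vert i) = x' (n • P.vert i)
    rw [← huw]
    exact hkey
  · intro hcp i x hx x' hx' hag p hp
    rw [Set.mem_singleton_iff] at hp
    subst hp
    refine hcp i x hx x' hx' ?_ (P.vert i) rfl
    intro q hq
    obtain ⟨hqc, hqne⟩ := hq
    refine hag q ⟨carrier_subset_cone P i (toR2 q) hqc, ?_⟩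
    intro h
    rw [Set.mem_singleton_iff] at h
    exact hqne (by rw [h]; exact rfl)

end PolygonalShifts
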